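/- Let k be a field, R = k[x_0,…,x_{n-1}], and f_0,…,f_{m-1} ∈ R forms of degree d whose generated subfield satisfies k(f_0,…,f_{m-1}) = k(x_0^d, x_1/x_0, …, x_{n-1}/x_0) in k(x_0,…,x_{n-1}). Let g = g_{d-1}·x_n + g_d ∈ R[x_n] where g_{d-1}, g_d ∈ R are forms of degrees d−1 and d respectively with g_{d-1} ≠ 0. Then k(f_0,…,f_{m-1}, g) = k(x_0^d, x_1/x_0, …, x_{n-1}/x_0, x_n/x_0) inside k(x_0,…,x_n); in particular the rational map defined by (f_0,…,f_{m-1}, g) is birational onto its image. -/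

import Mathlib

open MvPolynomial

/-- The rational function field `k(x_0,…,x_n)`. -/
abbrev RatFuncField (k : Type*) [Field k] (n : ℕ) : Type _ :=
  FractionRing (MvPolynomial (Fin (n + 1)) k)

/-- A polynomial in `x_0,…,x_n` viewed inside `k(x_0,…,x_n)`. -/
noncomputable def toF {k : Type*} [Field k] {n : ℕ} (p : MvPolynomial (Fin (n + 1)) k) :
    RatFuncField k n :=
  algebraMap (MvPolynomial (Fin (n + 1)) k) (RatFuncField k n) p

/-- The variable `x_i` viewed inside `k(x_0,…,x_n)`. -/
noncomputable def xv {k : Type*} [Field k] {n : ℕ} (i : Fin (n + 1)) : RatFuncField k n :=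
  toF (X i)

lemma toF_add {k : Type*} [Field k] {n : ℕ} (p q : MvPolynomial (Fin (n + 1)) k) :
    toF (p + q) = toF p + toF q :=
  map_add (algebraMap (MvPolynomial (Fin (n + 1)) k) (RatFuncField k n)) p q

lemma toF_mul {k : Type*} [Field k] {n : ℕ} (p q : MvPolynomial (Fin (n + 1)) k) :
    toF (p * q) = toF p * toF q :=
  map_mul (algebraMap (MvPolynomial (Fin (n + 1)) k) (RatFuncField k n)) p q

lemma toF_zero {k : Type*} [Field k] {n : ℕ} : toF (0 : MvPolynomial (Fin (n + 1)) k) = 0 :=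
  map_zero (algebraMap (MvPolynomial (Fin (n + 1)) k) (RatFuncField k n))

lemma aeval_mem_of_mem {k F : Type*} [Field k] [Field F] [Algebra k F] {n : ℕ}
    {K : IntermediateField k F} {v : Fin n → F} (hv : ∀ i, v i ∈ K)
    (p : MvPolynomial (Fin n) k) : aeval v p ∈ K := by
  induction p using MvPolynomial.induction_on with
  | C a => simpa using K.algebraMap_mem a
  | add p q hp hq => simpa using add_mem hp hq
  | mul_X p i hp => simpa using mul_mem hp (hv i)

lemma homog_aeval_mul {k F : Type*} [Field k] [CommRing F] [Algebra k F] {n e : ℕ}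
    {p : MvPolynomial (Fin n) k} (hp : p.IsHomogeneous e) (c : F) (v : Fin n → F) :
    aeval (fun i => c * v i) p = c ^ e * aeval v p := by
  rw [aeval_def, aeval_def, eval₂_eq, eval₂_eq, Finset.mul_sum]
  refine Finset.sum_congr rfl fun s hs => ?_
  have hdeg := hp (mem_support_iff.mp hs)
  have hsum : ∑ i ∈ s.support, s i = e := by
    simpa [Finsupp.weight_apply, Finsupp.sum] using hdeg
  rw [← hsum]
  simp_rw [mul_pow, Finset.prod_mul_distrib, Finset.prod_pow_eq_pow_sum]
  ring

lemma toF_rename {k : Type*} [Field k] {n : ℕ} (p : MvPolynomial (Fin n) k) :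
    toF (rename Fin.castSucc p : MvPolynomial (Fin (n + 1)) k) =
      aeval (fun i : Fin n => xv i.castSucc) p := by
  induction p using MvPolynomial.induction_on with
  | C a =>
      simp only [rename_C, aeval_C, toF]
      rw [IsScalarTower.algebraMap_apply k (MvPolynomial (Fin (n + 1)) k) (RatFuncField k n)]
      rfl
  | add p q hp hq => rw [map_add, toF_add, hp, hq, map_add]
  | mul_X p i hp =>
      rw [map_mul, rename_X, toF_mul, hp, map_mul, aeval_X]
      rfl

lemma toF_injective {k : Type*} [Field k] {n : ℕ} :
    Function.Injective (toF (k := k) (n := n)) :=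
  IsFractionRing.injective _ _

theorem monoid_extension_birational
    {k : Type*} [Field k] {n m d : ℕ} (hn : 1 ≤ n) (hd : 1 ≤ d)
    (f : Fin m → MvPolynomial (Fin n) k)
    (hf : ∀ j, (f j).IsHomogeneous d)
    (hbir : IntermediateField.adjoin k
        (Set.range fun j => toF (rename Fin.castSucc (f j) : MvPolynomial (Fin (n + 1)) k)) =
      IntermediateField.adjoin k
        (insert ((xv 0 : RatFuncField k n) ^ d)
          {y : RatFuncField k n | ∃ i : Fin n, i.castSucc ≠ 0 ∧ y = xv i.castSucc / xv 0}))
    (g1 g0 : MvPolynomial (Fin n) k)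
    (hg1 : g1.IsHomogeneous (d - 1)) (hg1ne : g1 ≠ 0) (hg0 : g0.IsHomogeneous d) :
    IntermediateField.adjoin k
        ((Set.range fun j => toF (rename Fin.castSucc (f j) : MvPolynomial (Fin (n + 1)) k)) ∪
          {toF ((rename Fin.castSucc g1) * X (Fin.last n) + rename Fin.castSucc g0)}) =
      IntermediateField.adjoin k
        (insert ((xv 0 : RatFuncField k n) ^ d)
          {y : RatFuncField k n | ∃ i : Fin (n + 1), i ≠ 0 ∧ y = xv i / xv 0}) := by
  classical
  set F := RatFuncField k n
  set c : F := xv 0 with hc_def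
  have hc : c ≠ 0 := by
    rw [hc_def, xv]
    intro h
    exact X_ne_zero (R := k) (0 : Fin (n + 1))
      (toF_injective (by rw [h, toF_zero]))
  set v : Fin n → F := fun i => xv i.castSucc / c with hv_def
  have hcv : ∀ i, c * v i = xv i.castSucc := fun i => by
    rw [hv_def]; simp only; rw [mul_div_assoc', mul_comm, mul_div_assoc, div_self hc, mul_one]
  have key : ∀ (e : ℕ) (p : MvPolynomial (Fin n) k), p.IsHomogeneous e →
      toF (rename Fin.castSucc p : MvPolynomial (Fin (n + 1)) k) = c ^ e * aeval v p := by
    intro e p hp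
    rw [toF_rename]
    have : (fun i : Fin n => xv i.castSucc) = fun i => c * v i := by
      funext i; rw [hcv]
    rw [this, homog_aeval_mul hp]
  set A : F := aeval v g1 with hA_def
  set B : F := aeval v g0 with hB_def
  have hA : toF (rename Fin.castSucc g1 : MvPolynomial (Fin (n + 1)) k) = c ^ (d - 1) * A :=
    key _ _ hg1
  have hB : toF (rename Fin.castSucc g0 : MvPolynomial (Fin (n + 1)) k) = c ^ d * B :=
    key _ _ hg0
  have hAne : A ≠ 0 := by
    intro h
    apply hg1ne
    have h0 : toF (rename Fin.castSucc g1 : MvPolynomial (Fin (n + 1)) k) = 0 := by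
      rw [hA, h, mul_zero]
    have h1 : (rename Fin.castSucc g1 : MvPolynomial (Fin (n + 1)) k) = 0 := by
      apply toF_injective
      rw [h0, toF_zero]
    exact (rename_injective _ (Fin.castSucc_injective n)) (by simpa using h1)
  set G : F := toF ((rename Fin.castSucc g1) * X (Fin.last n) + rename Fin.castSucc g0)
    with hG_def
  have hG : G = c ^ (d - 1) * A * xv (Fin.last n) + c ^ d * B := by
    have h2 : G = toF (rename Fin.castSucc g1 : MvPolynomial (Fin (n + 1)) k) * xv (Fin.last n)
        + toF (rename Fin.castSucc g0 : MvPolynomial (Fin (n + 1)) k) := by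
      rw [hG_def, toF_add, toF_mul]; rfl
    rw [h2, hA, hB]
  have hcd : c ^ d = c ^ (d - 1) * c := by
    rw [← pow_succ, Nat.sub_add_cancel hd]
  have hlast_ne : (Fin.last n : Fin (n + 1)) ≠ 0 := by
    intro h
    have := congrArg Fin.val h
    simp at this
    omega
  set S : Set F :=
    (Set.range fun j => toF (rename Fin.castSucc (f j) : MvPolynomial (Fin (n + 1)) k)) ∪
      {toF ((rename Fin.castSucc g1) * X (Fin.last n) + rename Fin.castSucc g0)} with hS_def
  set T : Set F := insert (c ^ d)
      {y : F | ∃ i : Fin (n + 1), i ≠ 0 ∧ y = xv i / xv 0} with hT_def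
  set KS := IntermediateField.adjoin k S with hKS_def
  set KT := IntermediateField.adjoin k T with hKT_def
  -- memberships in KT
  have hcdT : c ^ d ∈ KT := IntermediateField.subset_adjoin _ _ (Set.mem_insert _ _)
  have hratT : ∀ i : Fin (n + 1), i ≠ 0 → xv i / c ∈ KT := fun i hi =>
    IntermediateField.subset_adjoin _ _ (Set.mem_insert_of_mem _ ⟨i, hi, rfl⟩)
  have hvT : ∀ i, v i ∈ KT := by
    intro i
    by_cases hi : (i.castSucc : Fin (n + 1)) = 0
    · have : v i = 1 := by rw [hv_def]; simp only; rw [hi, ← hc_def, div_self hc]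
      rw [this]; exact one_mem _
    · exact hratT _ hi
  have hAT : A ∈ KT := aeval_mem_of_mem hvT g1
  have hBT : B ∈ KT := aeval_mem_of_mem hvT g0
  have hlastT : xv (Fin.last n) / c ∈ KT := hratT _ hlast_ne
  -- memberships in KS
  have hsmall : IntermediateField.adjoin k
      (insert ((xv 0 : RatFuncField k n) ^ d)
        {y : RatFuncField k n | ∃ i : Fin n, i.castSucc ≠ 0 ∧ y = xv i.castSucc / xv 0}) ≤ KS := by
    rw [← hbir, hKS_def]
    exact IntermediateField.adjoin.mono _ _ _ (hS_def ▸ Set.subset_union_left)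
  have hcdS : c ^ d ∈ KS :=
    hsmall (IntermediateField.subset_adjoin _ _ (Set.mem_insert _ _))
  have hvS : ∀ i, v i ∈ KS := by
    intro i
    by_cases hi : (i.castSucc : Fin (n + 1)) = 0
    · have : v i = 1 := by rw [hv_def]; simp only; rw [hi, ← hc_def, div_self hc]
      rw [this]; exact one_mem _
    · exact hsmall (IntermediateField.subset_adjoin _ _ (Set.mem_insert_of_mem _ ⟨i, hi, rfl⟩))
  have hAS : A ∈ KS := aeval_mem_of_mem hvS g1
  have hBS : B ∈ KS := aeval_mem_of_mem hvS g0
  have hGS : G ∈ KS :=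
    IntermediateField.subset_adjoin _ _ (Set.mem_union_right _ rfl)
  have hlastS : xv (Fin.last n) / c ∈ KS := by
    have heq : xv (Fin.last n) / c = (G * (c ^ d)⁻¹ - B) * A⁻¹ := by
      rw [hG]
      have hcd' : c ^ d ≠ 0 := pow_ne_zero _ hc
      rw [eq_comm, mul_inv_eq_iff_eq_mul₀ hAne, sub_eq_iff_eq_add, mul_inv_eq_iff_eq_mul₀ hcd', hcd]
      linear_combination (c ^ (d - 1) * A * xv (Fin.last n)) * (mul_inv_cancel₀ hc).symm
    rw [heq]
    exact mul_mem (sub_mem (mul_mem hGS (inv_mem hcdS)) hBS) (inv_mem hAS)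
  -- main antisymm
  apply le_antisymm
  · rw [hKS_def, IntermediateField.adjoin_le_iff]
    intro y hy
    rcases hy with ⟨j, rfl⟩ | hy
    · exact (show toF (rename Fin.castSucc (f j) : MvPolynomial (Fin (n + 1)) k) ∈ KT by
        rw [key d (f j) (hf j)]
        exact mul_mem hcdT (aeval_mem_of_mem hvT (f j)))
    · rcases hy with rfl
      rw [← hG_def, hG]
      have h1 : c ^ (d - 1) * A * xv (Fin.last n) = c ^ d * (A * (xv (Fin.last n) / c)) := by
        rw [hcd]; linear_combination (c ^ (d - 1) * A * xv (Fin.last n)) * (mul_inv_cancel₀ hc).symm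
      rw [h1]
      exact add_mem (mul_mem hcdT (mul_mem hAT hlastT)) (mul_mem hcdT hBT)
  · rw [hKT_def, IntermediateField.adjoin_le_iff]
    intro y hy
    rcases hy with rfl | ⟨i, hi, rfl⟩
    · exact hcdS
    · by_cases hil : i = Fin.last n
      · rw [hil]; exact hlastS
      · obtain ⟨i', rfl⟩ := (Fin.eq_castSucc_or_eq_last i).resolve_right hil
        exact hvS i'
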